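/- Let f(x) = d·x (mod 1) with d ≥ 2 and let B ⊂ S^1 be a closed set on which f is injective. Then f restricted to B is orientation preserving if and only if S^1 \ B contains d − 1 pairwise disjoint open arcs each of length 1/d. -/

import Mathlib

open MeasureTheory Set Metric Filter Topology

noncomputable section

abbrev S1 := AddCircle (1 : ℝ)

def fd (d : ℕ) : S1 → S1 := fun x => d • x

def len (A : Set S1) : ℝ := (volume A).toReal

def IsHole (B H : Set S1) : Prop := ∃ x ∈ Bᶜ, H = connectedComponentIn Bᶜ x

def openArc (u w : S1) : Set S1 := {x | SBtw.sbtw u x w}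

def OrientPresOn (g : S1 → S1) (B : Set S1) : Prop :=
  Set.InjOn g B ∧ ∀ a ∈ B, ∀ b ∈ B, ∀ c ∈ B, SBtw.sbtw a b c → SBtw.sbtw (g a) (g b) (g c)

def emb (x : S1) : ℂ := (AddCircle.toCircle x : ℂ)

def chord (a b : S1) : Set ℂ := segment ℝ (emb a) (emb b)

def CH (A : Set S1) : Set ℂ := convexHull ℝ (emb '' A)

def Wandering (d N : ℕ) (T : Set S1) : Prop :=
  ∀ i j : ℕ, ((fd d)^[i] '' T).ncard = N ∧
    (i ≠ j → Disjoint (CH ((fd d)^[i] '' T)) (CH ((fd d)^[j] '' T)))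

def IsHoleEnum (B : Set S1) {N : ℕ} (H : Fin N → Set S1) : Prop :=
  Function.Injective H ∧ (∀ k, IsHole B (H k)) ∧ (∀ G, IsHole B G → ∃ k, H k = G) ∧
  ∀ k l : Fin N, k ≤ l → len (H k) ≤ len (H l)

def rem (d : ℕ) (s : ℝ) : ℝ := s - (⌊(d : ℝ) * s⌋ : ℝ) / d

def ImageHoleRel (g : S1 → S1) (H K : Set S1) : Prop :=
  ∃ u w : S1, u ≠ w ∧ H = openArc u w ∧ K = openArc (g u) (g w)

def InLimitSet (d : ℕ) (T : Set S1) (a b : S1) : Prop :=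
  ∃ φ : ℕ → ℕ, StrictMono φ ∧ ∃ u v : ℕ → S1,
    (∀ n, u n ∈ (fd d)^[φ n] '' T ∧ v n ∈ (fd d)^[φ n] '' T) ∧
    Tendsto (fun n => hausdorffDist (chord (u n) (v n)) (chord a b)) atTop (nhds 0)

namespace Stmt2Aux

def rr (z : S1) : ℝ := (AddCircle.equivIco 1 0 z : ℝ)

lemma rr_mk (x : ℝ) : rr (x : S1) = Int.fract x := by
  simp [rr, AddCircle.coe_equivIco_mk_apply]

lemma mk_rr (z : S1) : ((rr z : ℝ) : S1) = z := (AddCircle.equivIco 1 0).symm_apply_apply z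

lemma rr_mem (z : S1) : rr z ∈ Ico (0:ℝ) 1 := by
  have := (AddCircle.equivIco 1 0 z).2
  simpa [rr] using this

lemma rr_eq_zero_iff {z : S1} : rr z = 0 ↔ z = 0 := by
  constructor
  · intro h
    have := mk_rr z
    rw [h] at this
    simpa using this.symm
  · rintro rfl
    have : ((0:ℝ) : S1) = (0 : S1) := by norm_num
    rw [← this, rr_mk]; simp

lemma mk_fract (x : ℝ) : ((Int.fract x : ℝ) : S1) = ((x : ℝ) : S1) := by
  rw [← rr_mk]; exact mk_rr _

lemma rr_neg {z : S1} (hz : z ≠ 0) : rr (-z) = 1 - rr z := by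
  conv_lhs => rw [← mk_rr z]
  have h : (-(((rr z : ℝ)) : S1)) = ((-(rr z) : ℝ) : S1) := rfl
  rw [h, rr_mk, Int.fract_neg, Int.fract_eq_self.2 (rr_mem z)]
  rw [Int.fract_eq_self.2 (rr_mem z)]
  exact fun h => hz (rr_eq_zero_iff.1 h)

lemma fd_mk (d : ℕ) (s : ℝ) : fd d ((s : ℝ) : S1) = ((d * s : ℝ) : S1) := by
  show d • ((s:ℝ) : S1) = _
  rw [← QuotientAddGroup.mk_nsmul, nsmul_eq_mul]

lemma fd_sub (d : ℕ) (x y : S1) : fd d x - fd d y = fd d (x - y) := by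
  simp [fd, smul_sub]

lemma toIco_fract (x : ℝ) : toIcoMod (zero_lt_one' ℝ) 0 x = Int.fract x := toIcoMod_zero_one x

lemma toIoc_fract (x : ℝ) : toIocMod (zero_lt_one' ℝ) 0 x = 1 - Int.fract (-x) := by
  have := toIocMod_neg (zero_lt_one' ℝ) (0:ℝ) (-x)
  simp only [neg_neg, neg_zero] at this
  rw [this, toIco_fract]

lemma fract_congr {x y : ℝ} (h : ∃ z : ℤ, x - y = z) : Int.fract x = Int.fract y :=
  Int.fract_eq_fract.2 h

lemma core_iff {x y : ℝ} (hx : x ∈ Ico (0:ℝ) 1) (hy : y ∈ Ico (0:ℝ) 1) :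
    ((x ≤ 1 - Int.fract (-y)) ∧ ¬ (Int.fract (x - y) ≤ 1 - y)) ↔ (0 < x ∧ x < y) := by
  obtain ⟨hx0, hx1⟩ := hx
  obtain ⟨hy0, hy1⟩ := hy
  have hfx : Int.fract x = x := Int.fract_eq_self.2 ⟨hx0, hx1⟩
  have hfy : Int.fract y = y := Int.fract_eq_self.2 ⟨hy0, hy1⟩
  rcases eq_or_lt_of_le hy0 with h0 | hy0'
  · have : Int.fract (x - y) = x := by rw [← h0]; simpa using hfx
    simp only [this]
    constructor
    · rintro ⟨-, h2⟩; exact absurd (by linarith : x ≤ 1 - y) h2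
    · rintro ⟨-, h2⟩; linarith
  · have hfny : Int.fract (-y) = 1 - y := by
      rw [Int.fract_neg (by rw [hfy]; exact ne_of_gt hy0'), hfy]
    rw [hfny]
    rcases lt_trichotomy x y with hlt | heq | hgt
    · have hfxy : Int.fract (x - y) = x - y + 1 := by
        have : ⌊x - y⌋ = -1 := by
          apply Int.floor_eq_iff.2; constructor <;> push_cast <;> linarith
        rw [Int.fract, this]; push_cast; ring
      rw [hfxy]
      constructor
      · rintro ⟨-, h2⟩
        refine ⟨?_, hlt⟩
        by_contra h
        push_neg at h
        have : x = 0 := le_antisymm h hx0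
        exact h2 (by linarith)
      · rintro ⟨h1, -⟩
        exact ⟨by linarith, by intro h; linarith⟩
    · subst heq
      simp only [sub_self, Int.fract_zero]
      constructor
      · rintro ⟨-, h2⟩; exact absurd (by linarith) h2
      · rintro ⟨-, h2⟩; exact absurd rfl (ne_of_lt h2)
    · constructor
      · rintro ⟨h1, -⟩; linarith
      · rintro ⟨-, h2⟩; linarith

lemma sbtw_iff (a b c : S1) :
    SBtw.sbtw a b c ↔ 0 < rr (b - a) ∧ rr (b - a) < rr (c - a) := by
  induction a using QuotientAddGroup.induction_on with | H A =>
  induction b using QuotientAddGroup.induction_on with | H B =>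
  induction c using QuotientAddGroup.induction_on with | H C =>
  have hsub : ∀ X Y : ℝ, (X : S1) - (Y : S1) = ((X - Y : ℝ) : S1) := fun X Y => rfl
  rw [sbtw_iff_btw_not_btw]
  rw [show (Btw.btw (A:S1) B C ↔ toIcoMod (zero_lt_one' ℝ) 0 (B - A) ≤
      toIocMod (zero_lt_one' ℝ) 0 (C - A)) from QuotientAddGroup.btw_coe_iff',
    show (Btw.btw (C:S1) B A ↔ toIcoMod (zero_lt_one' ℝ) 0 (B - C) ≤
      toIocMod (zero_lt_one' ℝ) 0 (A - C)) from QuotientAddGroup.btw_coe_iff']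
  rw [hsub B A, hsub C A, rr_mk, rr_mk, toIco_fract, toIco_fract, toIoc_fract, toIoc_fract]
  set x := Int.fract (B - A) with hxdef
  set y := Int.fract (C - A) with hydef
  have eB : (B - A) - x = (⌊B - A⌋ : ℝ) := by rw [hxdef]; simp [Int.self_sub_fract]
  have eC : (C - A) - y = (⌊C - A⌋ : ℝ) := by rw [hydef]; simp [Int.self_sub_fract]
  have h1 : Int.fract (B - C) = Int.fract (x - y) := by
    apply fract_congr
    exact ⟨⌊B - A⌋ - ⌊C - A⌋, by push_cast; linarith⟩
  have h2 : Int.fract (-(A - C)) = Int.fract y := by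
    apply fract_congr; exact ⟨⌊C - A⌋, by push_cast; linarith⟩
  have h3 : Int.fract (-(C - A)) = Int.fract (-y) := by
    apply fract_congr; exact ⟨-⌊C - A⌋, by push_cast; linarith⟩
  rw [h1, h2, h3, Int.fract_fract]
  exact core_iff ⟨Int.fract_nonneg _, Int.fract_lt_one _⟩ ⟨Int.fract_nonneg _, Int.fract_lt_one _⟩

lemma mem_arc_iff {d : ℕ} (hd : 2 ≤ d) (a : S1) (t : ℝ) (ht0 : 0 ≤ t)
    (ht1 : t + 1/d ≤ 1) (x : S1) :
    x ∈ openArc (a + ((t : ℝ) : S1)) ((a + ((t : ℝ) : S1)) + (((1:ℝ)/d : ℝ) : S1)) ↔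
      rr (x - a) ∈ Ioo t (t + 1/d) := by
  have hd0 : (0:ℝ) < d := by positivity
  have h1d : (0:ℝ) < 1/d := by positivity
  have h1d1 : (1:ℝ)/d < 1 := by
    rw [div_lt_one hd0]; exact_mod_cast lt_of_lt_of_le one_lt_two hd
  set u := a + ((t : ℝ) : S1) with hu
  rw [openArc, mem_setOf_eq, sbtw_iff]
  have hwu : (u + (((1:ℝ)/d : ℝ) : S1)) - u = (((1:ℝ)/d : ℝ) : S1) := by abel
  rw [hwu, rr_mk, Int.fract_eq_self.2 ⟨le_of_lt h1d, h1d1⟩]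
  set σ := rr (x - a) with hσ
  obtain ⟨hσ0, hσ1⟩ := rr_mem (x - a)
  have hxu : x - u = ((σ - t : ℝ) : S1) := by
    rw [hu]
    have h2 : x - (a + ((t:ℝ):S1)) = (x - a) - ((t:ℝ):S1) := by abel
    rw [h2, (mk_rr (x-a)).symm]
    rfl
  rw [hxu, rr_mk]
  rcases lt_trichotomy t σ with hlt | heq | hgt
  · rw [Int.fract_eq_self.2 ⟨by linarith, by linarith⟩]
    constructor
    · rintro ⟨h1, h2⟩; exact ⟨hlt, by linarith⟩
    · rintro ⟨h1, h2⟩; exact ⟨by linarith, by linarith⟩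
  · subst heq
    simp only [sub_self, Int.fract_zero]
    constructor
    · rintro ⟨h1, -⟩; linarith
    · rintro ⟨h1, -⟩; linarith
  · have hfl : ⌊σ - t⌋ = -1 := by
      apply Int.floor_eq_iff.2; constructor <;> push_cast <;> linarith
    have h3 : Int.fract (σ - t) = σ - t + 1 := by rw [Int.fract, hfl]; push_cast; ring
    rw [h3]
    constructor
    · rintro ⟨-, h2⟩; linarith
    · rintro ⟨h1, -⟩; linarith

lemma rr_measurable : Measurable rr := by
  have : rr = (fun y : Ico (0:ℝ) (0+1) => (y : ℝ)) ∘ (AddCircle.measurableEquivIco 1 0) := by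
    funext z; rfl
  rw [this]
  exact measurable_subtype_coe.comp (AddCircle.measurableEquivIco 1 0).measurable

lemma volume_rr_Ioo {c : ℝ} (hc1 : c < 1) :
    volume {x : S1 | rr x ∈ Ioo (0:ℝ) c} = ENNReal.ofReal c := by
  have hmeas : MeasurableSet {x : S1 | rr x ∈ Ioo (0:ℝ) c} :=
    rr_measurable measurableSet_Ioo
  rw [AddCircle.add_projection_respects_measure (T := 1) 0 hmeas]
  have h : (QuotientAddGroup.mk ⁻¹' {x : S1 | rr x ∈ Ioo (0:ℝ) c}) ∩ Ioc 0 (0 + 1) = Ioo 0 c := by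
    ext y
    simp only [mem_inter_iff, mem_preimage, mem_setOf_eq, mem_Ioc, mem_Ioo, zero_add]
    constructor
    · rintro ⟨hf, hy0, hy1⟩
      rw [show (QuotientAddGroup.mk y : S1) = ((y:ℝ) : S1) from rfl, rr_mk] at hf
      rcases lt_or_eq_of_le hy1 with h | h
      · rwa [Int.fract_eq_self.2 ⟨le_of_lt hy0, h⟩] at hf
      · subst h; norm_num at hf
    · rintro ⟨hy0, hyc⟩
      refine ⟨?_, hy0, by linarith⟩
      rw [show (QuotientAddGroup.mk y : S1) = ((y:ℝ) : S1) from rfl, rr_mk,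
        Int.fract_eq_self.2 ⟨le_of_lt hy0, by linarith⟩]
      exact ⟨hy0, hyc⟩
  rw [h, Real.volume_Ioo, sub_zero]

lemma len_arc {d : ℕ} (hd : 2 ≤ d) (u : S1) :
    len (openArc u (u + (((1:ℝ)/d : ℝ) : S1))) = 1/d := by
  have hd0 : (0:ℝ) < d := by positivity
  have h1d1 : (1:ℝ)/d < 1 := by
    rw [div_lt_one hd0]; exact_mod_cast lt_of_lt_of_le one_lt_two hd
  have hset : openArc u (u + (((1:ℝ)/d : ℝ) : S1)) =
      (fun x => -u + x) ⁻¹' {z : S1 | rr z ∈ Ioo (0:ℝ) (1/(d:ℝ))} := by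
    ext x
    have h := mem_arc_iff hd u 0 le_rfl (by rw [zero_add]; linarith) x
    rw [show ((0:ℝ) : S1) = (0:S1) by norm_num, add_zero, zero_add] at h
    rw [h]
    simp only [mem_preimage, mem_setOf_eq]
    rw [show -u + x = x - u by abel]
  rw [len, hset, measure_preimage_add, volume_rr_Ioo h1d1,
    ENNReal.toReal_ofReal (by positivity)]

lemma count_le {d : ℕ} (hd : 0 < d) {x y : ℝ} (hxy : x ≤ y) (T : Finset (Fin (d-1)))
    (t : Fin (d-1) → ℝ)
    (hsub : ∀ k ∈ T, Ioo (t k) (t k + 1/d) ⊆ Ioo x y)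
    (hdisj : ∀ k ∈ T, ∀ l ∈ T, k ≠ l → Disjoint (Ioo (t k) (t k + 1/d)) (Ioo (t l) (t l + 1/d))) :
    (T.card : ℝ) / d ≤ y - x := by
  have hd0 : (0:ℝ) < d := by positivity
  have h1 : volume (⋃ k ∈ T, Ioo (t k) (t k + 1/d)) = ∑ k ∈ T, volume (Ioo (t k) (t k + 1/d)) := by
    apply measure_biUnion_finset
    · intro k hk l hl hkl
      exact hdisj k hk l hl hkl
    · intro k _; exact measurableSet_Ioo
  have h2 : (⋃ k ∈ T, Ioo (t k) (t k + 1/d)) ⊆ Ioo x y := by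
    simp only [iUnion_subset_iff]; exact hsub
  have h3 := (measure_mono h2).trans_eq (Real.volume_Ioo (a := x) (b := y))
  rw [h1] at h3
  have h4 : ∀ k ∈ T, volume (Ioo (t k) (t k + 1/d)) = ENNReal.ofReal (1/d) := by
    intro k _; rw [Real.volume_Ioo]; ring_nf
  rw [Finset.sum_congr rfl h4, Finset.sum_const, nsmul_eq_mul] at h3
  have h5 : (T.card : ENNReal) * ENNReal.ofReal (1/d) = ENNReal.ofReal (T.card * (1/d)) := by
    rw [ENNReal.ofReal_mul (by positivity)]
    congr 1
    simp [ENNReal.ofReal_natCast]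
  rw [h5] at h3
  have h6 := (ENNReal.ofReal_le_ofReal_iff (by linarith)).1 h3
  rw [div_eq_mul_inv, mul_comm] at *
  linarith [h6]

lemma mpr_dir {d : ℕ} (hd : 2 ≤ d) {B : Set S1} (hinj : Set.InjOn (fd d) B)
    (I : Fin (d-1) → Set S1)
    (hform : ∀ k, ∃ u : S1, I k = openArc u (u + (((1 : ℝ) / d : ℝ) : S1)))
    (hsubB : ∀ k, I k ⊆ Bᶜ)
    (hdisjI : ∀ k l, k ≠ l → Disjoint (I k) (I l)) :
    ∀ a ∈ B, ∀ b ∈ B, ∀ c ∈ B, SBtw.sbtw a b c → SBtw.sbtw (fd d a) (fd d b) (fd d c) := by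
  classical
  have hd0 : (0:ℝ) < d := by positivity
  have h1d : (0:ℝ) < 1/d := by positivity
  have h1d1 : (1:ℝ)/d < 1 := by
    rw [div_lt_one hd0]; exact_mod_cast lt_of_lt_of_le one_lt_two hd
  intro a ha b hb c hc habc
  rw [sbtw_iff] at habc
  obtain ⟨hs0, hss'⟩ := habc
  set s := rr (b - a) with hs_def
  set s' := rr (c - a) with hs'_def
  obtain ⟨hsge, hslt⟩ := rr_mem (b - a)
  obtain ⟨hs'ge, hs'lt⟩ := rr_mem (c - a)
  have hba : b ≠ a := by
    intro h; rw [h] at hs_def; simp only [sub_self] at hs_def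
    rw [hs_def] at hs0; rw [rr_eq_zero_iff.2 rfl] at hs0; exact lt_irrefl 0 hs0
  have hca : c ≠ a := by
    intro h; rw [h] at hs'_def; simp only [sub_self] at hs'_def
    have : s' = 0 := by rw [hs'_def]; exact rr_eq_zero_iff.2 rfl
    linarith
  have hbc : b ≠ c := by
    intro h; rw [h] at hs_def; rw [hs_def] at hss'; exact lt_irrefl _ (hs'_def ▸ hss')
  -- arcs in coordinates
  choose u hIu using hform
  set t : Fin (d-1) → ℝ := fun k => rr (u k - a) with ht_def
  have htmem : ∀ k, t k ∈ Ico (0:ℝ) 1 := fun k => rr_mem _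
  have hu_eq : ∀ k, a + ((t k : ℝ) : S1) = u k := by
    intro k
    show a + ((rr (u k - a) : ℝ) : S1) = u k
    rw [mk_rr]; abel
  have ht1 : ∀ k, t k + 1/d ≤ 1 := by
    intro k
    by_cases hua : u k = a
    · have : t k = 0 := by
        show rr (u k - a) = 0
        rw [hua, sub_self]; exact rr_eq_zero_iff.2 rfl
      rw [this]; linarith
    · by_contra hcon
      push_neg at hcon
      have hzk : u k - a ≠ 0 := fun h => hua (by rwa [sub_eq_zero] at h)
      have hra : rr (a - u k) = 1 - t k := by
        rw [show a - u k = -(u k - a) by abel, rr_neg hzk]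
      have htk0 : 0 < t k := lt_of_le_of_ne (htmem k).1
        (fun h => hzk (rr_eq_zero_iff.1 (by rw [← ht_def] at *; exact h.symm)))
      have hmem : a ∈ I k := by
        rw [hIu k, openArc, mem_setOf_eq, sbtw_iff]
        have hwu : (u k + (((1:ℝ)/d : ℝ) : S1)) - u k = (((1:ℝ)/d : ℝ) : S1) := by abel
        rw [hwu, rr_mk, Int.fract_eq_self.2 ⟨le_of_lt h1d, h1d1⟩, hra]
        constructor
        · linarith [(htmem k).2]
        · linarith
      exact (hsubB k hmem) ha
  have memIff : ∀ k x, x ∈ I k ↔ rr (x - a) ∈ Ioo (t k) (t k + 1/d) := by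
    intro k x
    rw [hIu k, ← hu_eq k]
    exact mem_arc_iff hd a (t k) (htmem k).1 (ht1 k) x
  have avoid : ∀ x ∈ B, ∀ k, rr (x - a) ∉ Ioo (t k) (t k + 1/d) := by
    intro x hx k hmem
    exact (hsubB k ((memIff k x).2 hmem)) hx
  have hdisjt : ∀ k l : Fin (d-1), k ≠ l →
      Disjoint (Ioo (t k) (t k + 1/d)) (Ioo (t l) (t l + 1/d)) := by
    intro k l hkl
    rw [Set.disjoint_left]
    intro σ h1 h2
    have hσ0 : 0 ≤ σ := le_trans (htmem k).1 (le_of_lt h1.1)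
    have hσ1 : σ < 1 := lt_of_lt_of_le h1.2 (ht1 k)
    have hrr : rr ((a + ((σ:ℝ):S1)) - a) = σ := by
      rw [show (a + ((σ:ℝ):S1)) - a = ((σ:ℝ):S1) by abel, rr_mk,
        Int.fract_eq_self.2 ⟨hσ0, hσ1⟩]
    have m1 : (a + ((σ:ℝ):S1)) ∈ I k := (memIff k _).2 (by rw [hrr]; exact h1)
    have m2 : (a + ((σ:ℝ):S1)) ∈ I l := (memIff l _).2 (by rw [hrr]; exact h2)
    exact Set.disjoint_left.1 (hdisjI k l hkl) m1 m2
  -- now the goal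
  rw [sbtw_iff]
  have hfb : rr (fd d b - fd d a) = Int.fract (d * s) := by
    rw [fd_sub, ← mk_rr (b - a), fd_mk, rr_mk]
  have hfc : rr (fd d c - fd d a) = Int.fract (d * s') := by
    rw [fd_sub, ← mk_rr (c - a), fd_mk, rr_mk]
  rw [hfb, hfc]
  have hinjne : fd d b ≠ fd d a := fun h => hba (hinj hb ha h)
  have hinjne2 : fd d c ≠ fd d a := fun h => hca (hinj hc ha h)
  have hinjne3 : fd d b ≠ fd d c := fun h => hbc (hinj hb hc h)
  have hfs_ne : Int.fract (d * s) ≠ 0 := by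
    intro h
    apply hinjne
    have : fd d b - fd d a = 0 := by
      rw [fd_sub, ← mk_rr (b - a), fd_mk, ← mk_fract, h]
      norm_num
    rwa [sub_eq_zero] at this
  have hfs'_ne : Int.fract (d * s') ≠ 0 := by
    intro h
    apply hinjne2
    have : fd d c - fd d a = 0 := by
      rw [fd_sub, ← mk_rr (c - a), fd_mk, ← mk_fract, h]
      norm_num
    rwa [sub_eq_zero] at this
  have hne : Int.fract (d * s) ≠ Int.fract (d * s') := by
    intro h
    apply hinjne3
    have e1 : fd d b - fd d a = ((Int.fract (d*s) : ℝ) : S1) := by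
      rw [fd_sub, ← mk_rr (b - a), fd_mk, ← mk_fract]
    have e2 : fd d c - fd d a = ((Int.fract (d*s') : ℝ) : S1) := by
      rw [fd_sub, ← mk_rr (c - a), fd_mk, ← mk_fract]
    have : fd d b - fd d a = fd d c - fd d a := by rw [e1, e2, h]
    have := sub_left_injective.eq_iff.1 this  -- maybe wrong name
    exact this
  -- counting
  set P : Finset (Fin (d-1)) := Finset.univ.filter (fun k => t k + 1/d ≤ s) with hP
  set Q : Finset (Fin (d-1)) := Finset.univ.filter (fun k => s ≤ t k ∧ t k + 1/d ≤ s') with hQ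
  set W : Finset (Fin (d-1)) := Finset.univ.filter (fun k => s' ≤ t k) with hW
  have hcover : ∀ k : Fin (d-1), k ∈ P ∨ k ∈ Q ∨ k ∈ W := by
    intro k
    by_cases h1 : s' ≤ t k
    · right; right; exact Finset.mem_filter.2 ⟨Finset.mem_univ _, h1⟩
    push_neg at h1
    by_cases h2 : t k + 1/d ≤ s
    · left; exact Finset.mem_filter.2 ⟨Finset.mem_univ _, h2⟩
    push_neg at h2
    right; left; rw [hQ]; simp only [Finset.mem_filter, Finset.mem_univ, true_and]
    have hsk : s ≤ t k := by
      by_contra h3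
      push_neg at h3
      exact avoid b hb k (Set.mem_Ioo.2 ⟨h3, h2⟩)
    refine ⟨hsk, ?_⟩
    by_contra h4
    push_neg at h4
    exact avoid c hc k (Set.mem_Ioo.2 ⟨h1, h4⟩)
  have hcard : (d - 1 : ℕ) ≤ P.card + Q.card + W.card := by
    have : Finset.univ ⊆ P ∪ Q ∪ W := by
      intro k _
      rcases hcover k with h | h | h
      · exact Finset.mem_union_left _ (Finset.mem_union_left _ h)
      · exact Finset.mem_union_left _ (Finset.mem_union_right _ h)
      · exact Finset.mem_union_right _ h
    calc (d - 1 : ℕ) = (Finset.univ : Finset (Fin (d-1))).card := by simp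
    _ ≤ (P ∪ Q ∪ W).card := Finset.card_le_card this
    _ ≤ (P ∪ Q).card + W.card := Finset.card_union_le _ _
    _ ≤ P.card + Q.card + W.card := by
        have := Finset.card_union_le P Q
        omega
  have hPcount : (P.card : ℝ)/d ≤ s - 0 := by
    apply count_le (by omega) (by linarith) P t
    · intro k hk
      rw [hP, Finset.mem_filter] at hk
      intro σ hσ
      exact ⟨lt_of_le_of_lt (htmem k).1 hσ.1, lt_of_lt_of_le hσ.2 hk.2⟩
    · intro k _ l _ hkl; exact hdisjt k l hkl
  have hQcount : (Q.card : ℝ)/d ≤ s' - s := by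
    apply count_le (by omega) (le_of_lt hss') Q t
    · intro k hk
      rw [hQ, Finset.mem_filter] at hk
      intro σ hσ
      exact ⟨lt_of_le_of_lt hk.2.1 hσ.1, lt_of_lt_of_le hσ.2 hk.2.2⟩
    · intro k _ l _ hkl; exact hdisjt k l hkl
  have hWcount : (W.card : ℝ)/d ≤ 1 - s' := by
    apply count_le (by omega) (by linarith) W t
    · intro k hk
      rw [hW, Finset.mem_filter] at hk
      intro σ hσ
      exact ⟨lt_of_le_of_lt hk.2 hσ.1, lt_of_lt_of_le hσ.2 (ht1 k)⟩
    · intro k _ l _ hkl; exact hdisjt k l hkl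
  -- floors
  have hfloor_s : (P.card : ℤ) ≤ ⌊d * s⌋ := by
    rw [Int.le_floor]
    push_cast
    have := hPcount
    rw [div_le_iff₀ hd0] at this  -- (P.card) ≤ (s-0)*d
    linarith
  have hfloor_s' : (⌊d * s'⌋ : ℤ) ≤ (d : ℤ) - W.card - 1 := by
    have h1 : (⌊d * s'⌋ : ℝ) < d * s' := by
      have := Int.fract_nonneg (d * s')
      have h2 : Int.fract (d * s') = d * s' - ⌊d * s'⌋ := Int.self_sub_floor _ |>.symm
      have h3 : 0 < Int.fract (d * s') := lt_of_le_of_ne this (Ne.symm hfs'_ne)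
      linarith
    have h2 : d * s' ≤ (d : ℝ) - W.card := by
      rw [div_le_iff₀ hd0] at hWcount
      nlinarith
    have : (⌊d * s'⌋ : ℝ) < (d : ℝ) - W.card := lt_of_lt_of_le h1 h2
    have : (⌊d * s'⌋ : ℤ) < (d : ℤ) - W.card := by exact_mod_cast this
    omega
  -- conclude
  have hfract_s : Int.fract (d * s) = d * s - ⌊d * s⌋ := (Int.self_sub_floor _).symm
  have hfract_s' : Int.fract (d * s') = d * s' - ⌊d * s'⌋ := (Int.self_sub_floor _).symm
  have hQd : (Q.card : ℝ) ≤ d * (s' - s) := by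
    rw [div_le_iff₀ hd0] at hQcount
    linarith
  have hcast : ((d - 1 : ℕ) : ℝ) = (d : ℝ) - 1 := by
    have : (1:ℕ) ≤ d := by omega
    push_cast [Nat.cast_sub this]
    ring
  have hcardR : (d : ℝ) - 1 ≤ (P.card : ℝ) + Q.card + W.card := by
    rw [← hcast]
    exact_mod_cast hcard
  have hle : Int.fract (d * s) ≤ Int.fract (d * s') := by
    rw [hfract_s, hfract_s']
    have h1 : (⌊d * s'⌋ : ℝ) - ⌊d * s⌋ ≤ (d : ℝ) - W.card - 1 - P.card := by
      have e1 : (⌊d * s'⌋ : ℝ) ≤ (d : ℝ) - W.card - 1 := by exact_mod_cast hfloor_s'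
      have e2 : (P.card : ℝ) ≤ (⌊d * s⌋ : ℝ) := by exact_mod_cast hfloor_s
      linarith
    have h2 : (d : ℝ) - W.card - 1 - P.card ≤ Q.card := by linarith
    linarith
  constructor
  · exact lt_of_le_of_ne (Int.fract_nonneg _) (Ne.symm hfs_ne)
  · exact lt_of_le_of_ne hle hne


lemma mp_dir {d : ℕ} (hd : 2 ≤ d) {B : Set S1} (hinj : Set.InjOn (fd d) B)
    (hord : ∀ a ∈ B, ∀ b ∈ B, ∀ c ∈ B, SBtw.sbtw a b c → SBtw.sbtw (fd d a) (fd d b) (fd d c)) :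
    ∃ I : Fin (d - 1) → Set S1,
      (∀ k, ∃ u : S1, I k = openArc u (u + (((1 : ℝ) / d : ℝ) : S1)) ∧ len (I k) = 1 / d) ∧
      (∀ k, I k ⊆ Bᶜ) ∧ (∀ k l, k ≠ l → Disjoint (I k) (I l)) := by
  classical
  have hd0 : (0:ℝ) < d := by positivity
  have h1d : (0:ℝ) < 1/d := by positivity
  set a : S1 := if h : B.Nonempty then h.choose else 0 with ha_def
  have haB : B.Nonempty → a ∈ B := by
    intro h
    rw [ha_def, dif_pos h]
    exact h.choose_spec
  have P1 : ∀ x ∈ B, x ≠ a → Int.fract (d * rr (x - a)) ≠ 0 := by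
    intro x hx hxa h0
    apply hxa
    apply hinj hx (haB ⟨x, hx⟩)
    have e : fd d x - fd d a = ((Int.fract (d * rr (x - a)) : ℝ) : S1) := by
      conv_lhs => rw [fd_sub, ← mk_rr (x - a), fd_mk]
      rw [mk_fract]
    rw [h0] at e
    norm_num at e
    rwa [sub_eq_zero] at e
  have P2 : ∀ x ∈ B, ∀ y ∈ B, 0 < rr (x - a) → rr (x - a) < rr (y - a) →
      Int.fract (d * rr (x - a)) < Int.fract (d * rr (y - a)) := by
    intro x hx y hy h1 h2
    have haB' : a ∈ B := haB ⟨x, hx⟩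
    have hs := hord a haB' x hx y hy ((sbtw_iff a x y).2 ⟨h1, h2⟩)
    rw [sbtw_iff] at hs
    have e1 : rr (fd d x - fd d a) = Int.fract (d * rr (x - a)) := by
      conv_lhs => rw [fd_sub, ← mk_rr (x - a), fd_mk]
      rw [rr_mk]
    have e2 : rr (fd d y - fd d a) = Int.fract (d * rr (y - a)) := by
      conv_lhs => rw [fd_sub, ← mk_rr (y - a), fd_mk]
      rw [rr_mk]
    rw [e1, e2] at hs
    exact hs.2
  set E : Fin (d-1) → Set ℝ := fun j =>
    insert 0 {v | ∃ x ∈ B, 0 < rr (x - a) ∧ rr (x - a) < (((j:ℕ):ℝ)+1)/d ∧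
      v = Int.fract (d * rr (x - a))} with hE
  have hEne : ∀ j, (E j).Nonempty := fun j => ⟨0, mem_insert _ _⟩
  have hEbdd : ∀ j, BddAbove (E j) := by
    intro j
    refine ⟨1, ?_⟩
    rintro v (rfl | ⟨x, hx, h1, h2, rfl⟩)
    · norm_num
    · exact le_of_lt (Int.fract_lt_one _)
  set cc : Fin (d-1) → ℝ := fun j => sSup (E j) with hcc
  have hcc0 : ∀ j, 0 ≤ cc j := fun j => le_csSup (hEbdd j) (mem_insert _ _)
  have hcc1 : ∀ j, cc j ≤ 1 := by
    intro j
    apply csSup_le (hEne j)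
    rintro v (rfl | ⟨x, hx, h1, h2, rfl⟩)
    · norm_num
    · exact le_of_lt (Int.fract_lt_one _)
  have hccmono : ∀ j l : Fin (d-1), (j:ℕ) ≤ (l:ℕ) → cc j ≤ cc l := by
    intro j l hjl
    apply csSup_le_csSup (hEbdd l) (hEne j)
    rintro v (rfl | ⟨x, hx, h1, h2, rfl⟩)
    · exact mem_insert _ _
    · refine mem_insert_iff.2 (Or.inr ⟨x, hx, h1, ?_, rfl⟩)
      refine lt_of_lt_of_le h2 ?_
      gcongr
  have hjd : ∀ j : Fin (d-1), ((j:ℕ):ℝ) + 2 ≤ d := by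
    intro j
    have h1 := j.isLt
    have h2 : (j:ℕ) + 2 ≤ d := by omega
    exact_mod_cast h2
  set L : Fin (d-1) → ℝ := fun j => (((j:ℕ):ℝ) + cc j)/d with hL
  have hL0 : ∀ j, 0 ≤ L j := by
    intro j
    have h1 := hcc0 j
    have h2 : (0:ℝ) ≤ ((j:ℕ):ℝ) := Nat.cast_nonneg _
    apply div_nonneg (by linarith) (le_of_lt hd0)
  have hL1 : ∀ j, L j + 1/d ≤ 1 := by
    intro j
    have h1 := hjd j
    have h2 := hcc1 j
    rw [hL]
    simp only
    rw [← add_div, div_le_one hd0]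
    linarith
  refine ⟨fun j => openArc (a + ((L j : ℝ) : S1)) ((a + ((L j : ℝ) : S1)) + (((1:ℝ)/d : ℝ) : S1)),
    ?_, ?_, ?_⟩
  · intro k
    exact ⟨a + ((L k : ℝ) : S1), rfl, len_arc hd _⟩
  · intro k x hx
    rw [mem_compl_iff]
    intro hxB
    obtain ⟨hm1, hm2⟩ := (mem_arc_iff hd a (L k) (hL0 k) (hL1 k) x).1 hx
    set σ := rr (x - a) with hσ_def
    have hxa : x ≠ a := by
      intro h
      have h0 : σ = 0 := by rw [hσ_def, h, sub_self]; exact rr_eq_zero_iff.2 rfl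
      have := hL0 k
      rw [h0] at hm1
      linarith
    have hσ0 : 0 < σ := lt_of_le_of_lt (hL0 k) hm1
    have hfr : Int.fract (d * σ) ≠ 0 := P1 x hxB hxa
    have hfloor : Int.fract (d*σ) = d*σ - ⌊d*σ⌋ := (Int.self_sub_floor _).symm
    by_cases hcase : σ < (((k:ℕ):ℝ)+1)/d
    · have hvE : Int.fract (d*σ) ∈ E k := mem_insert_iff.2 (Or.inr ⟨x, hxB, hσ0, hcase, rfl⟩)
      have hvle : Int.fract (d*σ) ≤ cc k := le_csSup (hEbdd k) hvE
      have hdσ : d*σ < ((k:ℕ):ℝ)+1 := by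
        rw [lt_div_iff₀ hd0] at hcase
        linarith
      have hfl : (⌊d*σ⌋ : ℝ) ≤ ((k:ℕ):ℝ) := by
        have h1 : ⌊d*σ⌋ < ((k:ℕ):ℤ) + 1 := Int.floor_lt.2 (by exact_mod_cast hdσ)
        have h2 : ⌊d*σ⌋ ≤ ((k:ℕ):ℤ) := by omega
        exact_mod_cast h2
      have hσle : σ ≤ L k := by
        rw [hL]
        simp only
        rw [le_div_iff₀ hd0]
        linarith
      linarith
    · push_neg at hcase
      have hne : σ ≠ (((k:ℕ):ℝ)+1)/d := by
        intro h
        apply hfr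
        have h2 : d * σ = ((((k:ℕ)+1: ℕ)):ℝ) := by rw [h, Nat.cast_succ]; field_simp
        rw [h2, Int.fract_natCast]
      have hgt : (((k:ℕ):ℝ)+1)/d < σ := lt_of_le_of_ne hcase (Ne.symm hne)
      have hdσ : ((k:ℕ):ℝ)+1 < d * σ := by
        rw [div_lt_iff₀ hd0] at hgt
        linarith
      have hflo : (((k:ℕ):ℤ)+1 : ℤ) ≤ ⌊d*σ⌋ := Int.le_floor.2 (by push_cast; linarith)
      have hfloR : ((k:ℕ):ℝ)+1 ≤ (⌊d*σ⌋ : ℝ) := by exact_mod_cast hflo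
      have hub : cc k ≤ Int.fract (d*σ) := by
        apply csSup_le (hEne k)
        rintro v (rfl | ⟨y, hy, h1, h2, rfl⟩)
        · exact Int.fract_nonneg _
        · exact le_of_lt (P2 y hy x hxB h1 (lt_trans h2 hgt))
      have : L k + 1/d ≤ σ := by
        rw [hL]
        simp only
        rw [← add_div, div_le_iff₀ hd0]
        have := Int.fract_nonneg (d*σ)
        linarith
      linarith
  · intro k l hkl
    have key : ∀ k l : Fin (d-1), (k:ℕ) < (l:ℕ) →
        Disjoint (openArc (a + ((L k : ℝ) : S1)) ((a + ((L k : ℝ) : S1)) + (((1:ℝ)/d : ℝ) : S1)))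
          (openArc (a + ((L l : ℝ) : S1)) ((a + ((L l : ℝ) : S1)) + (((1:ℝ)/d : ℝ) : S1))) := by
      intro k l hkl'
      rw [Set.disjoint_left]
      intro x h1 h2
      obtain ⟨a1, a2⟩ := (mem_arc_iff hd a (L k) (hL0 k) (hL1 k) x).1 h1
      obtain ⟨b1, b2⟩ := (mem_arc_iff hd a (L l) (hL0 l) (hL1 l) x).1 h2
      have hcm := hccmono k l (le_of_lt hkl')
      have hkl'' : ((k:ℕ):ℝ) + 1 ≤ ((l:ℕ):ℝ) := by exact_mod_cast hkl'
      have : L k + 1/d ≤ L l := by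
        rw [hL]
        simp only
        rw [← add_div, div_le_div_iff₀ hd0 hd0]
        nlinarith
      linarith
    have hne : (k:ℕ) ≠ (l:ℕ) := by
      intro h
      exact hkl (Fin.ext h)
    rcases Nat.lt_or_ge (k:ℕ) (l:ℕ) with h | h
    · exact key k l h
    · exact (key l k (lt_of_le_of_ne h (Ne.symm hne))).symm


end Stmt2Aux


/-- orientation preserving iff the complement contains d-1 pairwise
disjoint open arcs of length 1/d. -/
theorem stmt2 (d : ℕ) (hd : 2 ≤ d) (B : Set S1) (hBcl : IsClosed B)
    (hinj : Set.InjOn (fd d) B) :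
    OrientPresOn (fd d) B ↔
      ∃ I : Fin (d - 1) → Set S1,
        (∀ k, ∃ u : S1, I k = openArc u (u + (((1 : ℝ) / d : ℝ) : S1)) ∧
          len (I k) = 1 / d) ∧
        (∀ k, I k ⊆ Bᶜ) ∧
        (∀ k l, k ≠ l → Disjoint (I k) (I l)) := by
  constructor
  · rintro ⟨hinj', hord⟩
    exact Stmt2Aux.mp_dir hd hinj hord
  · rintro ⟨I, hform, hsub, hdisj⟩
    exact ⟨hinj, Stmt2Aux.mpr_dir hd hinj I (fun k => (hform k).imp (fun u h => h.1)) hsub hdisj⟩
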